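/- Fix μ > 0 and K > 0, and let p(s) = e^{μs}/(e^{μs} + K). Then for any constants A, B ∈ ℝ, the function f(s) = A + B p(s) + (2s/μ)(1 − 2p(s)) satisfies the ODE ½ f''(s) + (p(s) − ½) μ f'(s) + 1 = 0 for all s ∈ ℝ. -/

import Mathlib

/-- with `p s = exp (μ s) / (exp (μ s) + K)` (`μ > 0`, `K > 0`), for any
constants `A B`, the function `f s = A + B * p s + (2 s / μ) * (1 - 2 * p s)` satisfies
`½ f'' (s) + (p s - ½) μ f' (s) + 1 = 0` for all `s`. -/
theorem statement3 (μ K : ℝ) (hμ : 0 < μ) (hK : 0 < K)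
    (p : ℝ → ℝ) (hp : ∀ s, p s = Real.exp (μ * s) / (Real.exp (μ * s) + K))
    (A B : ℝ) (f : ℝ → ℝ)
    (hf : ∀ s, f s = A + B * p s + (2 * s / μ) * (1 - 2 * p s)) :
    ∀ s, (1 / 2) * deriv (deriv f) s + (p s - 1 / 2) * μ * deriv f s + 1 = 0 := by
  have hf' : f = fun s => A + B * p s + (2 * s / μ) * (1 - 2 * p s) := funext hf
  have hp' : p = fun s => Real.exp (μ * s) / (Real.exp (μ * s) + K) := funext hp
  subst hf' hp'
  have hne : ∀ t : ℝ, Real.exp (μ * t) + K ≠ 0 := fun t => by positivity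
  have hE : ∀ t : ℝ, HasDerivAt (fun t => Real.exp (μ * t)) (μ * Real.exp (μ * t)) t := by
    intro t
    have := (Real.hasDerivAt_exp (μ * t)).comp t ((hasDerivAt_id t).const_mul μ)
    simpa [mul_comm, Function.comp_def] using this
  have hP : ∀ t : ℝ, HasDerivAt (fun t => Real.exp (μ * t) / (Real.exp (μ * t) + K))
      (μ * Real.exp (μ * t) * K / (Real.exp (μ * t) + K) ^ 2) t := by
    intro t
    have h := (hE t).div ((hE t).add_const K) (hne t)
    refine h.congr_deriv ?_
    field_simp
    ring
  have hF : ∀ t : ℝ, HasDerivAt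
      (fun s : ℝ => A + B * (Real.exp (μ * s) / (Real.exp (μ * s) + K)) +
        (2 * s / μ) * (1 - 2 * (Real.exp (μ * s) / (Real.exp (μ * s) + K))))
      (B * (μ * Real.exp (μ * t) * K / (Real.exp (μ * t) + K) ^ 2) +
        ((2 / μ) * (1 - 2 * (Real.exp (μ * t) / (Real.exp (μ * t) + K))) +
          (2 * t / μ) * (-(2 * (μ * Real.exp (μ * t) * K / (Real.exp (μ * t) + K) ^ 2))))) t := by
    intro t
    have h1 := (hasDerivAt_const t A).add ((hP t).const_mul B)
    have h2 : HasDerivAt (fun s : ℝ => 2 * s / μ) (2 / μ) t := by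
      simpa using ((hasDerivAt_id t).const_mul 2).div_const μ
    have h3 : HasDerivAt
        (fun s : ℝ => 1 - 2 * (Real.exp (μ * s) / (Real.exp (μ * s) + K)))
        (-(2 * (μ * Real.exp (μ * t) * K / (Real.exp (μ * t) + K) ^ 2))) t :=
      ((hP t).const_mul 2).const_sub 1
    have h := h1.add (h2.mul h3)
    refine h.congr_deriv ?_
    ring
  have hD : ∀ t : ℝ, HasDerivAt
      (fun t : ℝ => μ * Real.exp (μ * t) * K / (Real.exp (μ * t) + K) ^ 2)
      ((μ * (μ * Real.exp (μ * t)) * K * (Real.exp (μ * t) + K) ^ 2 -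
        μ * Real.exp (μ * t) * K *
          (2 * (Real.exp (μ * t) + K) ^ 1 * (μ * Real.exp (μ * t)))) /
        ((Real.exp (μ * t) + K) ^ 2) ^ 2) t := by
    intro t
    exact (((hE t).const_mul μ).mul_const K).div (((hE t).add_const K).pow 2)
      (by positivity)
  intro s
  have hderiv : deriv (fun s : ℝ => A + B * (Real.exp (μ * s) / (Real.exp (μ * s) + K)) +
        (2 * s / μ) * (1 - 2 * (Real.exp (μ * s) / (Real.exp (μ * s) + K)))) =
      fun t => B * (μ * Real.exp (μ * t) * K / (Real.exp (μ * t) + K) ^ 2) +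
        ((2 / μ) * (1 - 2 * (Real.exp (μ * t) / (Real.exp (μ * t) + K))) +
          (2 * t / μ) * (-(2 * (μ * Real.exp (μ * t) * K / (Real.exp (μ * t) + K) ^ 2)))) :=
    funext fun t => (hF t).deriv
  rw [hderiv]
  have hG : HasDerivAt
      (fun t => B * (μ * Real.exp (μ * t) * K / (Real.exp (μ * t) + K) ^ 2) +
        ((2 / μ) * (1 - 2 * (Real.exp (μ * t) / (Real.exp (μ * t) + K))) +
          (2 * t / μ) * (-(2 * (μ * Real.exp (μ * t) * K / (Real.exp (μ * t) + K) ^ 2)))))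
      (B * ((μ * (μ * Real.exp (μ * s)) * K * (Real.exp (μ * s) + K) ^ 2 -
          μ * Real.exp (μ * s) * K *
            (2 * (Real.exp (μ * s) + K) ^ 1 * (μ * Real.exp (μ * s)))) /
          ((Real.exp (μ * s) + K) ^ 2) ^ 2) +
        ((2 / μ) * (-(2 * (μ * Real.exp (μ * s) * K / (Real.exp (μ * s) + K) ^ 2))) +
          ((2 / μ) * (-(2 * (μ * Real.exp (μ * s) * K / (Real.exp (μ * s) + K) ^ 2))) +
            (2 * s / μ) *
              (-(2 * ((μ * (μ * Real.exp (μ * s)) * K * (Real.exp (μ * s) + K) ^ 2 -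
                μ * Real.exp (μ * s) * K *
                  (2 * (Real.exp (μ * s) + K) ^ 1 * (μ * Real.exp (μ * s)))) /
                ((Real.exp (μ * s) + K) ^ 2) ^ 2)))))) s := by
    have h1 := (hD s).const_mul B
    have h2 : HasDerivAt
        (fun t : ℝ => (2 / μ) * (1 - 2 * (Real.exp (μ * t) / (Real.exp (μ * t) + K))))
        ((2 / μ) * (-(2 * (μ * Real.exp (μ * s) * K / (Real.exp (μ * s) + K) ^ 2)))) s :=
      (((hP s).const_mul 2).const_sub 1).const_mul (2 / μ)
    have h3 : HasDerivAt (fun t : ℝ => 2 * t / μ) (2 / μ) s := by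
      simpa using ((hasDerivAt_id s).const_mul 2).div_const μ
    have h4 : HasDerivAt
        (fun t : ℝ => -(2 * (μ * Real.exp (μ * t) * K / (Real.exp (μ * t) + K) ^ 2)))
        (-(2 * ((μ * (μ * Real.exp (μ * s)) * K * (Real.exp (μ * s) + K) ^ 2 -
          μ * Real.exp (μ * s) * K *
            (2 * (Real.exp (μ * s) + K) ^ 1 * (μ * Real.exp (μ * s)))) /
          ((Real.exp (μ * s) + K) ^ 2) ^ 2))) s := ((hD s).const_mul 2).neg
    exact h1.add (h2.add (h3.mul h4))
  rw [hG.deriv]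
  have he : (0:ℝ) < Real.exp (μ * s) := Real.exp_pos _
  have hs : Real.exp (μ * s) + K ≠ 0 := hne s
  field_simp
  ring
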